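/- Let j:ℕ→ℕ be defined by j(n)=⌊φn⌋−1 if n∈R_{1,0}, j(n)=⌊(φ−1)n⌋+1 if n∈R_{1,1}, and j(n)=⌊φn⌋+1 if n∈R_{2,0}. If n∈R_{1,0}, then j(n)∈R_{1,0} and j(j(j(n))) = j(j(n)) + j(n) − 2. -/

import Mathlib

/-- The golden ratio φ = (1 + √5)/2. -/
noncomputable def phi : ℝ := (1 + Real.sqrt 5) / 2

/-- The lower Wythoff sequence a(n) = ⌊nφ⌋. -/
noncomputable def wa (n : ℕ) : ℕ := ⌊(n : ℝ) * phi⌋₊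

/-- f_{i,j}(n) = F(i+1)·a(n) + F(i)·n − j. -/
noncomputable def fij (i : ℕ) (j : ℤ) (n : ℕ) : ℤ :=
  (Nat.fib (i + 1) : ℤ) * wa n + (Nat.fib i : ℤ) * n - j

/-- R_{i,j} = { f_{i,j}(n) : n ∈ ℕ, n ≥ 1 }. -/
def R (i : ℕ) (j : ℤ) : Set ℤ := {m | ∃ n : ℕ, 0 < n ∧ fij i j n = m}

open scoped Classical in
/-- j(n) = ⌊φn⌋−1 if n ∈ R_{1,0}, ⌊(φ−1)n⌋+1 if n ∈ R_{1,1}, ⌊φn⌋+1 if n ∈ R_{2,0}. -/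
noncomputable def jmap (n : ℕ) : ℕ :=
  if (n : ℤ) ∈ R 1 0 then wa n - 1
  else if (n : ℤ) ∈ R 1 1 then ⌊(phi - 1) * (n : ℝ)⌋₊ + 1
  else wa n + 1

lemma phi_eq : phi = Real.goldenRatio := rfl

lemma phi_pos : 0 < phi := Real.goldenRatio_pos

lemma phi_gt_one : 1 < phi := Real.one_lt_goldenRatio

lemma phi_lt_two : phi < 2 := Real.goldenRatio_lt_two

lemma phi_sq : phi ^ 2 = phi + 1 := Real.goldenRatio_sq

lemma phi_irr : Irrational phi := Real.goldenRatio_irrational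

lemma wa_int (n : ℕ) : (wa n : ℤ) = ⌊(n : ℝ) * phi⌋ := by
  rw [wa, Int.natCast_floor_eq_floor]
  exact mul_nonneg (Nat.cast_nonneg n) phi_pos.le

lemma fract_pos_phi (m : ℕ) (hm : 0 < m) : 0 < Int.fract ((m : ℝ) * phi) := by
  rw [Int.fract_pos]
  have h : Irrational ((m : ℝ) * phi) := phi_irr.natCast_mul hm.ne'
  exact h.ne_int _

lemma wa_split (m : ℕ) : (m : ℝ) * phi = (wa m : ℤ) + Int.fract ((m : ℝ) * phi) := by
  rw [wa_int]
  exact (Int.floor_add_fract _).symm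

lemma wa_pos (m : ℕ) (hm : 0 < m) : 0 < wa m := by
  rw [wa]
  have : (1 : ℝ) ≤ (m : ℝ) * phi := by
    have hm1 : (1 : ℝ) ≤ (m : ℝ) := by exact_mod_cast hm
    nlinarith [phi_gt_one]
  exact Nat.floor_pos.mpr this

/-- a(a(m)) = a(m) + m − 1 for m ≥ 1. -/
lemma lemA (m : ℕ) (hm : 0 < m) : (wa (wa m) : ℤ) = wa m + m - 1 := by
  set θ := Int.fract ((m : ℝ) * phi) with hθ
  have hsplit := wa_split m
  have hθ0 : 0 < θ := fract_pos_phi m hm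
  have hθ1 : θ < 1 := Int.fract_lt_one _
  have hw : (wa m : ℝ) = (m : ℝ) * phi - θ := by
    push_cast at hsplit ⊢; linarith
  have hints : (0:ℝ) ≤ (1 - θ) * (phi - 1) ∧ (0:ℝ) < θ * (phi - 1) := by
    constructor
    · apply mul_nonneg <;> nlinarith [phi_gt_one]
    · apply mul_pos hθ0; nlinarith [phi_gt_one]
  rw [wa_int (wa m), Int.floor_eq_iff]
  constructor
  · push_cast
    nlinarith [phi_sq, phi_gt_one, phi_lt_two, hints.1, hints.2]
  · push_cast
    nlinarith [phi_sq, phi_gt_one, phi_lt_two, hints.1, hints.2]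

/-- a(b(m)) = 2a(m) + m for m ≥ 1. -/
lemma lemB (m : ℕ) (hm : 0 < m) : (wa (wa m + m) : ℤ) = 2 * wa m + m := by
  set θ := Int.fract ((m : ℝ) * phi) with hθ
  have hsplit := wa_split m
  have hθ0 : 0 < θ := fract_pos_phi m hm
  have hθ1 : θ < 1 := Int.fract_lt_one _
  have hw : (wa m : ℝ) = (m : ℝ) * phi - θ := by
    push_cast at hsplit ⊢; linarith
  have hints : (0:ℝ) ≤ (1 - θ) * (2 - phi) ∧ (0:ℝ) ≤ θ * (2 - phi) := by
    constructor
    · apply mul_nonneg <;> nlinarith [phi_lt_two]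
    · apply mul_nonneg hθ0.le; nlinarith [phi_lt_two]
  rw [wa_int (wa m + m), Int.floor_eq_iff]
  constructor
  · push_cast
    nlinarith [phi_sq, phi_gt_one, phi_lt_two, hints.1, hints.2]
  · push_cast
    nlinarith [phi_sq, phi_gt_one, phi_lt_two, hints.1, hints.2]

lemma memR (m : ℕ) (hm : 0 < m) : ((wa m + m : ℕ) : ℤ) ∈ R 1 0 := by
  exact ⟨m, hm, by simp [fij]⟩

lemma jmap_b (m : ℕ) (hm : 0 < m) : jmap (wa m + m) = wa (wa m) + wa m := by
  rw [jmap, if_pos (memR m hm)]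
  have hB := lemB m hm
  have hA := lemA m hm
  have h1 := wa_pos m hm
  omega

theorem stmt_12 (n : ℕ) (hn : 0 < n) (hmem : (n : ℤ) ∈ R 1 0) :
    (jmap n : ℤ) ∈ R 1 0 ∧
    (jmap (jmap (jmap n)) : ℤ) = (jmap (jmap n) : ℤ) + (jmap n : ℤ) - 2 := by
  obtain ⟨m, hm, hf⟩ := hmem
  have hfn : (wa m : ℤ) + m = n := by
    simpa [fij] using hf
  have hn_eq : n = wa m + m := by exact_mod_cast hfn.symm
  have h1 := wa_pos m hm
  have h2 := wa_pos _ h1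
  have h3 := wa_pos _ h2
  have e1 : jmap n = wa (wa m) + wa m := by rw [hn_eq, jmap_b m hm]
  have e2 : jmap (jmap n) = wa (wa (wa m)) + wa (wa m) := by
    rw [e1, jmap_b _ h1]
  have e3 : jmap (jmap (jmap n)) = wa (wa (wa (wa m))) + wa (wa (wa m)) := by
    rw [e2, jmap_b _ h2]
  constructor
  · rw [e1]; exact memR _ h1
  · have hA1 := lemA _ h1
    have hA2 := lemA _ h2
    have hA3 := lemA _ h3
    rw [e3, e2, e1]
    push_cast
    omega
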